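/- Let Φ, Ψ : ℝ → ℝ be positive twice differentiable functions satisfying the Ermakov–Ray–Reid system Φ'' + ω(t)²Φ = F(Ψ/Φ)/(Φ²Ψ) and Ψ'' + ω(t)²Ψ = G(Φ/Ψ)/(ΦΨ²), where F, G : ℝ → ℝ are continuous. Then I = (1/2)(ΦΨ' - ΨΦ')² + ∫^{Ψ/Φ} F(z) dz + ∫^{Φ/Ψ} G(w) dw is constant in time (i.e. its derivative vanishes: (ΦΨ' - ΨΦ')·(ΦΨ'' - ΨΦ'') + F(Ψ/Φ)·(Ψ/Φ)' + G(Φ/Ψ)·(Φ/Ψ)' = 0 implies I' = 0 where the integrals denote fixed antiderivatives of F and G). -/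

import Mathlib

/-- the general Ray–Reid invariant of a 2-component
Ermakov–Ray–Reid system is constant. -/
theorem stmt12 (ω : ℝ → ℝ) (hω : Continuous ω) (F G IF IG : ℝ → ℝ)
    (hF : Continuous F) (hG : Continuous G)
    (hIF : ∀ z, HasDerivAt IF (F z) z) (hIG : ∀ w, HasDerivAt IG (G w) w)
    (Φ Ψ Φ' Ψ' : ℝ → ℝ) (hΦpos : ∀ t, 0 < Φ t) (hΨpos : ∀ t, 0 < Ψ t)
    (hΦ : ∀ t, HasDerivAt Φ (Φ' t) t) (hΨ : ∀ t, HasDerivAt Ψ (Ψ' t) t)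
    (hΦ' : ∀ t, HasDerivAt Φ'
      (-(ω t) ^ 2 * Φ t + F (Ψ t / Φ t) / ((Φ t) ^ 2 * Ψ t)) t)
    (hΨ' : ∀ t, HasDerivAt Ψ'
      (-(ω t) ^ 2 * Ψ t + G (Φ t / Ψ t) / (Φ t * (Ψ t) ^ 2)) t) :
    ∃ I : ℝ, ∀ t, (1 / 2) * (Φ t * Ψ' t - Ψ t * Φ' t) ^ 2
      + IF (Ψ t / Φ t) + IG (Φ t / Ψ t) = I := by
  set H : ℝ → ℝ := fun t => (1 / 2) * (Φ t * Ψ' t - Ψ t * Φ' t) ^ 2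
      + IF (Ψ t / Φ t) + IG (Φ t / Ψ t) with hHdef
  have key : ∀ t, HasDerivAt H 0 t := by
    intro t
    have hΦt : Φ t ≠ 0 := (hΦpos t).ne'
    have hΨt : Ψ t ≠ 0 := (hΨpos t).ne'
    have h1 : HasDerivAt (fun t => Ψ t / Φ t)
        ((Ψ' t * Φ t - Ψ t * Φ' t) / (Φ t) ^ 2) t := (hΨ t).div (hΦ t) hΦt
    have h2 : HasDerivAt (fun t => Φ t / Ψ t)
        ((Φ' t * Ψ t - Φ t * Ψ' t) / (Ψ t) ^ 2) t := (hΦ t).div (hΨ t) hΨt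
    have hIFc := (hIF (Ψ t / Φ t)).comp t h1
    have hIGc := (hIG (Φ t / Ψ t)).comp t h2
    have hW : HasDerivAt (fun t => Φ t * Ψ' t - Ψ t * Φ' t)
        (Φ' t * Ψ' t + Φ t * (-(ω t) ^ 2 * Ψ t + G (Φ t / Ψ t) / (Φ t * (Ψ t) ^ 2))
          - (Ψ' t * Φ' t + Ψ t * (-(ω t) ^ 2 * Φ t + F (Ψ t / Φ t) / ((Φ t) ^ 2 * Ψ t)))) t :=
      ((hΦ t).mul (hΨ' t)).sub ((hΨ t).mul (hΦ' t))
    have hsq := ((hW.pow 2).const_mul (1/2 : ℝ)).add hIFc |>.add hIGc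
    refine HasDerivAt.congr_deriv hsq ?_
    field_simp
    ring
  refine ⟨H 0, fun t => ?_⟩
  have : H t = H 0 := by
    have hd : Differentiable ℝ H := fun x => (key x).differentiableAt
    exact is_const_of_deriv_eq_zero hd (fun x => (key x).deriv) t 0
  simpa [hHdef] using this
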